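/- If Δ is a vertex decomposable simplicial complex, then the s-skeleton of Δ is vertex decomposable for every s. -/

import Mathlib

variable {ι : Type*} [DecidableEq ι]

/-- A clutter: an antichain of finite sets (no circuit properly contains another). -/
def IsClutter (C : Set (Finset ι)) : Prop :=
  ∀ e₁ ∈ C, ∀ e₂ ∈ C, e₁ ⊆ e₂ → e₁ = e₂

/-- The independence complex of the clutter with circuit set `C` on ground set `V`:
faces are the subsets of `V` containing no circuit. -/
def indepOn (V : Finset ι) (C : Set (Finset ι)) : Set (Finset ι) :=
  {σ | σ ⊆ V ∧ ∀ e ∈ C, ¬ e ⊆ σ}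

/-- The minimal members of a family of finite sets. -/
def minimalSets (S : Set (Finset ι)) : Set (Finset ι) :=
  {e | e ∈ S ∧ ∀ f ∈ S, f ⊆ e → f = e}

/-- Deletion of a vertex from a clutter: keep the circuits avoiding `v`. -/
def clDel (C : Set (Finset ι)) (v : ι) : Set (Finset ι) :=
  {e | e ∈ C ∧ v ∉ e}

/-- Contraction of a vertex in a clutter: minimal sets among `{e \ {v}}`. -/
def clCon (C : Set (Finset ι)) (v : ι) : Set (Finset ι) :=
  minimalSets ((fun e => e.erase v) '' C)

/-- A simplicial complex: a family of finite sets closed under taking subsets. -/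
def IsComplex (Δ : Set (Finset ι)) : Prop :=
  ∀ σ ∈ Δ, ∀ τ, τ ⊆ σ → τ ∈ Δ

/-- The link of a face `σ`. -/
def link (Δ : Set (Finset ι)) (σ : Finset ι) : Set (Finset ι) :=
  {τ | Disjoint τ σ ∧ τ ∪ σ ∈ Δ}

/-- The face-deletion `Δ \ σ`: faces of `Δ` not containing `σ`. -/
def delFace (Δ : Set (Finset ι)) (σ : Finset ι) : Set (Finset ι) :=
  {τ | τ ∈ Δ ∧ ¬ σ ⊆ τ}

/-- The star of a face `σ`, as a subcomplex. -/
def starC (Δ : Set (Finset ι)) (σ : Finset ι) : Set (Finset ι) :=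
  {τ | τ ∈ Δ ∧ τ ∪ σ ∈ Δ}

/-- A facet: a maximal face. -/
def IsFacet (Δ : Set (Finset ι)) (σ : Finset ι) : Prop :=
  σ ∈ Δ ∧ ∀ τ ∈ Δ, σ ⊆ τ → σ = τ

/-- A shedding face: every face `τ` of the star of `σ` satisfies the exchange property:
for every `v ∈ σ` there is `w ∉ τ` with `(τ ∪ {w}) \ {v}` a face. -/
def SheddingFace (Δ : Set (Finset ι)) (σ : Finset ι) : Prop :=
  ∀ τ ∈ Δ, σ ⊆ τ → ∀ v ∈ σ, ∃ w, w ∉ τ ∧ (insert w τ).erase v ∈ Δ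

/-- Shellability (Björner–Wachs form): an ordering `f 0, f 1, …` of the facets such
that for all `i < j` there are `k < j` and `x ∈ f j` with
`f i ∩ f j ⊆ f k ∩ f j = f j \ {x}`. -/
def Shellable (Δ : Set (Finset ι)) : Prop :=
  ∃ (m : ℕ) (f : Fin m → Finset ι),
    Function.Injective f ∧
    (∀ σ, IsFacet Δ σ ↔ ∃ i, f i = σ) ∧
    ∀ i j : Fin m, i < j →
      ∃ k, k < j ∧ ∃ x ∈ f j, f i ∩ f j ⊆ f k ∩ f j ∧ f k ∩ f j = (f j).erase x

/-- `k`-decomposability (for possibly non-pure complexes): a complex is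
`k`-decomposable if it is a simplex (or degenerate), or has a shedding face of
dimension at most `k` whose deletion and link are both `k`-decomposable. -/
inductive KDecomposable : ℤ → Set (Finset ι) → Prop
  | of_empty (k : ℤ) : KDecomposable k ∅
  | of_simplex (k : ℤ) (σ : Finset ι) : KDecomposable k {τ | τ ⊆ σ}
  | of_shed (k : ℤ) (Δ : Set (Finset ι)) (σ : Finset ι) (hσ : σ ∈ Δ)
      (hne : σ.Nonempty) (hdim : (σ.card : ℤ) ≤ k + 1)
      (hshed : SheddingFace Δ σ)
      (h₁ : KDecomposable k (delFace Δ σ)) (h₂ : KDecomposable k (link Δ σ)) :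
      KDecomposable k Δ

/-- A simplicial vertex of a clutter: any two distinct circuits `e₁, e₂` containing `v`
admit a third circuit `e₃ ⊆ (e₁ ∪ e₂) \ {v}`. -/
def SimplicialVertex (C : Set (Finset ι)) (v : ι) : Prop :=
  ∀ e₁ ∈ C, ∀ e₂ ∈ C, e₁ ≠ e₂ → v ∈ e₁ → v ∈ e₂ →
    ∃ e₃ ∈ C, e₃ ⊆ (e₁ ∪ e₂).erase v

/-- Minors of a clutter (with ground set): obtained by repeated deletions and contractions. -/
inductive Minor : Finset ι → Set (Finset ι) → Finset ι → Set (Finset ι) → Prop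
  | refl (V : Finset ι) (C : Set (Finset ι)) : Minor V C V C
  | del {V C W D} (v : ι) (hv : v ∈ W) (h : Minor V C W D) :
      Minor V C (W.erase v) (clDel D v)
  | con {V C W D} (v : ι) (hv : v ∈ W) (h : Minor V C W D) :
      Minor V C (W.erase v) (clCon D v)

/-- Contractions of a clutter (with ground set): obtained by repeated contractions. -/
inductive ConMinor : Finset ι → Set (Finset ι) → Finset ι → Set (Finset ι) → Prop
  | refl (V : Finset ι) (C : Set (Finset ι)) : ConMinor V C V C
  | con {V C W D} (v : ι) (hv : v ∈ W) (h : ConMinor V C W D) :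
      ConMinor V C (W.erase v) (clCon D v)

/-- A clutter is chordal if every minor with at least one vertex has a simplicial vertex. -/
def Chordal (V : Finset ι) (C : Set (Finset ι)) : Prop :=
  ∀ W D, Minor V C W D → W.Nonempty → ∃ v ∈ W, SimplicialVertex D v

/-- Clutter of minimal non-faces of a complex `Δ` on ground set `V`. -/
def nonfaceClutter (V : Finset ι) (Δ : Set (Finset ι)) : Set (Finset ι) :=
  {e | e ⊆ V ∧ e ∉ Δ ∧ ∀ e', e' ⊂ e → e' ∈ Δ}

/-- `cNon V C d`: the `d`-non-circuits of `C`, i.e. the `d`-subsets of `V`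
that are not circuits of `C`. -/
def cNon (V : Finset ι) (C : Set (Finset ι)) (d : ℕ) : Set (Finset ι) :=
  {e | e ⊆ V ∧ e.card = d ∧ e ∉ C}

/-- Combinatorial Alexander dual of a complex on ground set `V`. -/
def alexDual (V : Finset ι) (Δ : Set (Finset ι)) : Set (Finset ι) :=
  {σ | σ ⊆ V ∧ V \ σ ∉ Δ}

/-- Join of two complexes. -/
def joinC (Δ₁ Δ₂ : Set (Finset ι)) : Set (Finset ι) :=
  {σ | ∃ σ₁ ∈ Δ₁, ∃ σ₂ ∈ Δ₂, σ = σ₁ ∪ σ₂}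

/-- Skeleta of simplices are vertex decomposable. -/
lemma skel_simplex : ∀ (σ : Finset ι) (n : ℕ),
    KDecomposable 0 {τ | τ ⊆ σ ∧ τ.card ≤ n} := by
  intro σ
  induction σ using Finset.strongInduction with
  | _ σ ih =>
  intro n
  rcases le_or_gt σ.card n with h | h
  · have hset : {τ | τ ⊆ σ ∧ τ.card ≤ n} = {τ | τ ⊆ σ} := by
      ext τ
      simp only [Set.mem_setOf_eq, and_iff_left_iff_imp]
      exact fun hτ => le_trans (Finset.card_le_card hτ) h
    rw [hset]
    exact KDecomposable.of_simplex 0 σ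
  · -- n < σ.card, so σ is nonempty
    have hσne : σ.Nonempty := Finset.card_pos.mp (by omega)
    rcases Nat.eq_zero_or_pos n with hn | hn
    · have hset : {τ | τ ⊆ σ ∧ τ.card ≤ n} = {τ | τ ⊆ (∅ : Finset ι)} := by
        ext τ
        simp only [Set.mem_setOf_eq, Finset.subset_empty, hn, Nat.le_zero,
          Finset.card_eq_zero]
        exact ⟨fun h => h.2, fun h => ⟨h ▸ Finset.empty_subset σ, h⟩⟩
      rw [hset]
      exact KDecomposable.of_simplex 0 ∅
    · obtain ⟨v, hv⟩ := hσne
      have hsub : σ.erase v ⊂ σ := Finset.erase_ssubset hv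
      refine KDecomposable.of_shed 0 _ {v} ⟨Finset.singleton_subset_iff.mpr hv, by
        simpa using Nat.one_le_iff_ne_zero.mpr hn.ne'⟩ (Finset.singleton_nonempty v) (by simp) ?_ ?_ ?_
      · -- shedding
        rintro τ ⟨hτσ, hτc⟩ hvτ u hu
        have hu' : u = v := Finset.mem_singleton.mp hu
        subst hu'
        have hss : τ ⊂ σ := hτσ.ssubset_of_ne (by rintro rfl; omega)
        obtain ⟨w, hwσ, hwτ⟩ := Finset.exists_of_ssubset hss
        refine ⟨w, hwτ, ⟨?_, ?_⟩⟩
        · exact (Finset.erase_subset _ _).trans (Finset.insert_subset hwσ hτσ)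
        · have hvmem : u ∈ insert w τ :=
            Finset.mem_insert_of_mem (Finset.singleton_subset_iff.mp hvτ)
          rw [Finset.card_erase_of_mem hvmem, Finset.card_insert_of_notMem hwτ]
          omega
      · -- deletion
        have hset : delFace {τ | τ ⊆ σ ∧ τ.card ≤ n} {v}
            = {τ | τ ⊆ σ.erase v ∧ τ.card ≤ n} := by
          ext τ
          simp only [delFace, Set.mem_setOf_eq, Finset.singleton_subset_iff,
            Finset.subset_erase]
          tauto
        rw [hset]
        exact ih _ hsub n
      · -- link
        have hset : link {τ | τ ⊆ σ ∧ τ.card ≤ n} {v}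
            = {τ | τ ⊆ σ.erase v ∧ τ.card ≤ n - 1} := by
          ext τ
          simp only [link, Set.mem_setOf_eq, Finset.disjoint_singleton_right,
            Finset.union_subset_iff, Finset.singleton_subset_iff,
            Finset.subset_erase]
          constructor
          · rintro ⟨hvτ, ⟨hτσ, _⟩, hc⟩
            rw [Finset.card_union_of_disjoint (by
              simpa [Finset.disjoint_singleton_right] using hvτ)] at hc
            simp at hc
            exact ⟨⟨hτσ, hvτ⟩, by omega⟩
          · rintro ⟨⟨hτσ, hvτ⟩, hc⟩
            refine ⟨hvτ, ⟨hτσ, hv⟩, ?_⟩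
            rw [Finset.card_union_of_disjoint (by
              simpa [Finset.disjoint_singleton_right] using hvτ)]
            simp; omega
        rw [hset]
        exact ih _ hsub (n - 1)

/-- Skeleta of vertex decomposable complexes are vertex decomposable. -/
lemma skel_kd {k : ℤ} {Δ : Set (Finset ι)} (h : KDecomposable k Δ)
    (hk : k ≤ 0) (n : ℕ) :
    KDecomposable 0 {σ | σ ∈ Δ ∧ σ.card ≤ n} := by
  revert hk
  induction h generalizing n with
  | of_empty =>
    intro hk
    have hset : {σ | σ ∈ (∅ : Set (Finset ι)) ∧ σ.card ≤ n} = ∅ := by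
      ext; simp
    rw [hset]
    exact KDecomposable.of_empty 0
  | of_simplex σ =>
    intro hk
    exact skel_simplex σ n
  | of_shed Δ σ hσ hne hdim hshed h₁ h₂ ih₁ ih₂ =>
    intro hk
    have hcard : σ.card = 1 := by
      have h1 : 1 ≤ σ.card := Finset.card_pos.mpr hne
      omega
    rcases Nat.eq_zero_or_pos n with hn | hn
    · subst hn
      by_cases he : (∅ : Finset ι) ∈ Δ
      · have hset : {σ | σ ∈ Δ ∧ σ.card ≤ 0} = {τ | τ ⊆ (∅ : Finset ι)} := by
          ext τ
          simp only [Set.mem_setOf_eq, Nat.le_zero, Finset.card_eq_zero,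
            Finset.subset_empty]
          exact ⟨fun h => h.2, fun h => ⟨h ▸ he, h⟩⟩
        rw [hset]
        exact KDecomposable.of_simplex 0 ∅
      · have hset : {σ | σ ∈ Δ ∧ σ.card ≤ 0} = ∅ := by
          ext τ
          simp only [Set.mem_setOf_eq, Nat.le_zero, Finset.card_eq_zero,
            Set.mem_empty_iff_false, iff_false]
          rintro ⟨hτ, rfl⟩
          exact he hτ
        rw [hset]
        exact KDecomposable.of_empty 0
    · refine KDecomposable.of_shed 0 _ σ ⟨hσ, by omega⟩ hne (by simp [hcard]) ?_ ?_ ?_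
      · -- shedding
        rintro τ ⟨hτΔ, hτc⟩ hστ v hv
        obtain ⟨w, hwτ, hw⟩ := hshed τ hτΔ hστ v hv
        refine ⟨w, hwτ, hw, ?_⟩
        have hvmem : v ∈ insert w τ := Finset.mem_insert_of_mem (hστ hv)
        rw [Finset.card_erase_of_mem hvmem, Finset.card_insert_of_notMem hwτ]
        omega
      · -- deletion
        have hset : delFace {σ | σ ∈ Δ ∧ σ.card ≤ n} σ
            = {τ | τ ∈ delFace Δ σ ∧ τ.card ≤ n} := by
          ext τ
          simp only [delFace, Set.mem_setOf_eq]
          tauto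
        rw [hset]
        exact ih₁ n hk
      · -- link
        have hset : link {σ | σ ∈ Δ ∧ σ.card ≤ n} σ
            = {τ | τ ∈ link Δ σ ∧ τ.card ≤ n - 1} := by
          ext τ
          simp only [link, Set.mem_setOf_eq]
          constructor
          · rintro ⟨hd, hm, hc⟩
            rw [Finset.card_union_of_disjoint hd, hcard] at hc
            exact ⟨⟨hd, hm⟩, by omega⟩
          · rintro ⟨⟨hd, hm⟩, hc⟩
            refine ⟨hd, hm, ?_⟩
            rw [Finset.card_union_of_disjoint hd, hcard]
            omega
        rw [hset]
        exact ih₂ (n - 1) hk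

/-- skeleta of vertex decomposable complexes are vertex decomposable. -/
theorem stmt9 (Δ : Set (Finset ι)) (hΔ : IsComplex Δ)
    (h : KDecomposable 0 Δ) (s : ℕ) :
    KDecomposable 0 {σ | σ ∈ Δ ∧ σ.card ≤ s + 1} :=
  skel_kd h le_rfl (s + 1)
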